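/- For every integer n ≥ −1, every i ∈ Fin d, j ∈ ℕ and every k ∈ ℤ, one has the commutator identity L(n) ∘ a_{i,j}(k) − a_{i,j}(k) ∘ L(n) = −k·a_{i,j}(n+k) as ℂ-linear endomorphisms of R (Proposition 3.1, equation (3.2)). -/

import Mathlib

open MvPolynomial

/-- Value of the operator `L(n)` on the monomial `X^e`, in the polynomial realization of `M(l)`:
`L(n) = (l/2)·∑_{i,j} ∑_{m=1}^{n-1} m(n-m)·∂_{i,j,m}∘∂_{i,j,n-m}
        + ∑_{i,j} ∑_{m ≥ max(1,n+1)} m·X_{i,j,m-n}∘∂_{i,j,m}`;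
on a fixed monomial only finitely many summands are nonzero, namely those whose rightmost
derivative variable lies in the support of `e`. -/
noncomputable def LnMono (d : ℕ) (l : ℂ) (n : ℤ)
    (e : (Fin d × ℕ × ℕ+) →₀ ℕ) : MvPolynomial (Fin d × ℕ × ℕ+) ℂ :=
  (l / 2) • (∑ v ∈ e.support,
      if h : ((v.2.2 : ℕ) : ℤ) < n then
        (((n - ((v.2.2 : ℕ) : ℤ)) * ((v.2.2 : ℕ) : ℤ) : ℤ) : ℂ) •
          pderiv (((v.1, v.2.1, ⟨(n - ((v.2.2 : ℕ) : ℤ)).toNat, by omega⟩) : Fin d × ℕ × ℕ+))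
            (pderiv v (monomial e (1 : ℂ)))
      else 0)
  + ∑ v ∈ e.support,
      if h : n < ((v.2.2 : ℕ) : ℤ) then
        (((v.2.2 : ℕ) : ℤ) : ℂ) •
          ((X (v.1, v.2.1, (⟨(((v.2.2 : ℕ) : ℤ) - n).toNat, by omega⟩ : ℕ+)) : MvPolynomial (Fin d × ℕ × ℕ+) ℂ) *
            pderiv v (monomial e (1 : ℂ)))
      else 0

/-- The operator `L(n)` (for any `n : ℤ`; only `n ≥ -1` is used) on the polynomial
realization `R = MvPolynomial (Fin d × ℕ × ℕ+) ℂ` of `M(l)`, defined on the monomial basis. -/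
noncomputable def Ln (d : ℕ) (l : ℂ) (n : ℤ) :
    Module.End ℂ (MvPolynomial (Fin d × ℕ × ℕ+) ℂ) :=
  (basisMonomials (Fin d × ℕ × ℕ+) ℂ).constr ℂ (LnMono d l n)

/-- The operators `a_{i,j}(k)` of the polynomial realization of `M(l)` (with `λ = 0`):
`a_{i,j}(k) = k·l·∂_{i,j,k}` for `k > 0`, `a_{i,j}(0) = 0`, and `a_{i,j}(k) = X_{i,j,-k}`
(multiplication) for `k < 0`. -/
noncomputable def aOp0 (d : ℕ) (l : ℂ) (i : Fin d) (j : ℕ) (k : ℤ) :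
    Module.End ℂ (MvPolynomial (Fin d × ℕ × ℕ+) ℂ) :=
  if hk : 0 < k then
    ((k : ℂ) * l) • (pderiv (i, j, (⟨k.toNat, by omega⟩ : ℕ+))).toLinearMap
  else if hk0 : k = 0 then
    0
  else
    LinearMap.mulLeft ℂ (X (i, j, (⟨(-k).toNat, by omega⟩ : ℕ+)))

namespace S5
open Finsupp
variable {σ : Type*}

theorem pderiv_comm [DecidableEq σ] (a b : σ) (p : MvPolynomial σ ℂ) :
    pderiv a (pderiv b p) = pderiv b (pderiv a p) := by
  induction p using MvPolynomial.induction_on' with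
  | monomial s c =>
    simp only [pderiv_monomial]
    rcases eq_or_ne a b with rfl | hab
    · rfl
    · have h1 : s - single b 1 - single a 1 = s - single a 1 - single b 1 := by
        ext x
        simp only [Finsupp.tsub_apply, Finsupp.single_apply]
        split_ifs <;> omega
      have h2 : (s - single b 1 : σ →₀ ℕ) a = s a := by
        rw [Finsupp.tsub_apply, Finsupp.single_apply, if_neg hab.symm, Nat.sub_zero]
      have h3 : (s - single a 1 : σ →₀ ℕ) b = s b := by
        rw [Finsupp.tsub_apply, Finsupp.single_apply, if_neg hab, Nat.sub_zero]
      rw [h1, h2, h3]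
      congr 1
      ring
  | add p q hp hq => simp [hp, hq]

theorem pderiv_X_mul [DecidableEq σ] (w v : σ) (p : MvPolynomial σ ℂ) :
    pderiv w (X v * p) = X v * pderiv w p + if w = v then p else 0 := by
  rw [pderiv_mul]
  rcases eq_or_ne w v with rfl | h
  · simp [add_comm]
  · simp [pderiv_X_of_ne (Ne.symm h), h]

theorem pderiv_monomial_one [DecidableEq σ] (v : σ) (e : σ →₀ ℕ) :
    pderiv v (monomial e (1 : ℂ)) = (e v : ℂ) • monomial (e - single v 1) (1 : ℂ) := by
  rw [pderiv_monomial, smul_monomial]; simp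

theorem pderiv_monomial_one_of_not_mem [DecidableEq σ] {v : σ} {e : σ →₀ ℕ} (h : v ∉ e.support) :
    pderiv v (monomial e (1 : ℂ)) = 0 := by
  rw [pderiv_monomial_one]
  simp [Finsupp.notMem_support_iff.mp h]

theorem X_mul_monomial_one (w : σ) (e : σ →₀ ℕ) :
    (X w : MvPolynomial σ ℂ) * monomial e 1 = monomial (e + single w 1) 1 := by
  rw [X, monomial_mul, one_mul, add_comm]

theorem support_add_single [DecidableEq σ] (e : σ →₀ ℕ) (w : σ) :
    (e + single w 1).support = insert w e.support := by
  ext v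
  rcases eq_or_ne v w with rfl | h
  · simp
  · simp [Finsupp.single_apply, Ne.symm h, h]

variable {d : ℕ}

noncomputable def Aterm (n : ℤ) (e : (Fin d × ℕ × ℕ+) →₀ ℕ) (v : Fin d × ℕ × ℕ+) :
    MvPolynomial (Fin d × ℕ × ℕ+) ℂ :=
  if h : ((v.2.2 : ℕ) : ℤ) < n then
    (((n - ((v.2.2 : ℕ) : ℤ)) * ((v.2.2 : ℕ) : ℤ) : ℤ) : ℂ) •
      pderiv (((v.1, v.2.1, ⟨(n - ((v.2.2 : ℕ) : ℤ)).toNat, by omega⟩) : Fin d × ℕ × ℕ+))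
        (pderiv v (monomial e (1 : ℂ)))
  else 0

noncomputable def Bterm (n : ℤ) (e : (Fin d × ℕ × ℕ+) →₀ ℕ) (v : Fin d × ℕ × ℕ+) :
    MvPolynomial (Fin d × ℕ × ℕ+) ℂ :=
  if h : n < ((v.2.2 : ℕ) : ℤ) then
    (((v.2.2 : ℕ) : ℤ) : ℂ) •
      ((X (v.1, v.2.1, (⟨(((v.2.2 : ℕ) : ℤ) - n).toNat, by omega⟩ : ℕ+)) : MvPolynomial (Fin d × ℕ × ℕ+) ℂ) *
        pderiv v (monomial e (1 : ℂ)))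
  else 0

noncomputable def Fterm (l : ℂ) (n : ℤ) (e : (Fin d × ℕ × ℕ+) →₀ ℕ) (v : Fin d × ℕ × ℕ+) :
    MvPolynomial (Fin d × ℕ × ℕ+) ℂ :=
  (l / 2) • Aterm n e v + Bterm n e v

theorem LnMono_eq (l : ℂ) (n : ℤ) (e : (Fin d × ℕ × ℕ+) →₀ ℕ) :
    LnMono d l n e = ∑ v ∈ e.support, Fterm l n e v := by
  unfold LnMono Fterm Aterm Bterm
  rw [Finset.smul_sum, ← Finset.sum_add_distrib]

theorem Fterm_eq_zero {e : (Fin d × ℕ × ℕ+) →₀ ℕ} {v : Fin d × ℕ × ℕ+}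
    (h : v ∉ e.support) : ∀ l n, Fterm l n e v = 0 := by
  intro l n
  unfold Fterm Aterm Bterm
  rw [pderiv_monomial_one_of_not_mem h]
  simp

theorem LnMono_eq_sum (l : ℂ) (n : ℤ) (e : (Fin d × ℕ × ℕ+) →₀ ℕ)
    (S : Finset (Fin d × ℕ × ℕ+)) (hS : e.support ⊆ S) :
    LnMono d l n e = ∑ v ∈ S, Fterm l n e v := by
  rw [LnMono_eq]
  exact Finset.sum_subset hS (fun v _ hv => Fterm_eq_zero hv l n)

theorem Ln_monomial (l : ℂ) (n : ℤ) (e : (Fin d × ℕ × ℕ+) →₀ ℕ) :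
    Ln d l n (monomial e (1 : ℂ)) = LnMono d l n e := by
  have := (basisMonomials (Fin d × ℕ × ℕ+) ℂ).constr_basis ℂ (LnMono d l n) e
  rwa [coe_basisMonomials] at this


theorem pderiv_sum {ι : Type*} (w : Fin d × ℕ × ℕ+) (S : Finset ι)
    (f : ι → MvPolynomial (Fin d × ℕ × ℕ+) ℂ) :
    pderiv w (∑ i ∈ S, f i) = ∑ i ∈ S, pderiv w (f i) :=
  map_sum (pderiv w).toLinearMap f S

abbrev Dc (n : ℤ) (w v : Fin d × ℕ × ℕ+) : Prop :=
  v.1 = w.1 ∧ v.2.1 = w.2.1 ∧ ((v.2.2 : ℕ) : ℤ) = n + ((w.2.2 : ℕ) : ℤ)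

theorem eq_of_Dc {n : ℤ} {w v : Fin d × ℕ × ℕ+} (h : Dc n w v) :
    w = (v.1, v.2.1, (⟨(((v.2.2 : ℕ) : ℤ) - n).toNat, by
      obtain ⟨h1, h2, h3⟩ := h; have := (w.2.2).pos; omega⟩ : ℕ+)) := by
  obtain ⟨h1, h2, h3⟩ := h
  have hp := (w.2.2).pos
  refine Prod.ext ?_ (Prod.ext ?_ ?_)
  · exact h1.symm
  · exact h2.symm
  · apply Subtype.ext
    show (w.2.2 : ℕ) = (((v.2.2 : ℕ) : ℤ) - n).toNat
    omega

theorem Dc_iff {n : ℤ} {w v : Fin d × ℕ × ℕ+} (hB : n < ((v.2.2 : ℕ) : ℤ)) :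
    (w = (v.1, v.2.1, (⟨(((v.2.2 : ℕ) : ℤ) - n).toNat, by omega⟩ : ℕ+))) ↔ Dc n w v := by
  constructor
  · intro h
    subst h
    refine ⟨rfl, rfl, ?_⟩
    show ((v.2.2 : ℕ) : ℤ) = n + (((((v.2.2 : ℕ) : ℤ) - n).toNat : ℕ) : ℤ)
    omega
  · exact eq_of_Dc

theorem Fterm_pderiv (l : ℂ) (n : ℤ) (e : (Fin d × ℕ × ℕ+) →₀ ℕ) (w v : Fin d × ℕ × ℕ+) :
    pderiv w (Fterm l n e v)
      = (e w : ℂ) • Fterm l n (e - single w 1) v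
        + (if Dc n w v then (((v.2.2 : ℕ) : ℤ) : ℂ) • pderiv v (monomial e (1 : ℂ)) else 0) := by
  have hkey : ∀ u : Fin d × ℕ × ℕ+, pderiv u (pderiv v (monomial e (1 : ℂ)))
      = (e u : ℂ) • pderiv v (monomial (e - single u 1) (1 : ℂ)) := by
    intro u
    rw [pderiv_comm u v, pderiv_monomial_one u e, Derivation.map_smul]
  have hkey2 : ∀ u u' : Fin d × ℕ × ℕ+,
      pderiv u' (pderiv u (pderiv v (monomial e (1 : ℂ))))
      = (e u' : ℂ) • pderiv u (pderiv v (monomial (e - single u' 1) (1 : ℂ))) := by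
    intro u u'
    rw [pderiv_comm u' u, hkey u', Derivation.map_smul]
  unfold Fterm Aterm Bterm
  by_cases hA : ((v.2.2 : ℕ) : ℤ) < n
  · have hB : ¬ n < ((v.2.2 : ℕ) : ℤ) := by omega
    have hD : ¬ Dc n w v := by
      rintro ⟨-, -, h3⟩
      have := (w.2.2).pos
      omega
    rw [dif_pos hA, dif_neg hB, if_neg hD, dif_pos hA, dif_neg hB]
    rw [add_zero, add_zero, add_zero, Derivation.map_smul, Derivation.map_smul, hkey2]
    rw [smul_smul, smul_smul, smul_smul, smul_smul]
    congr 1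
    ring
  · by_cases hB : n < ((v.2.2 : ℕ) : ℤ)
    · rw [dif_neg hA, dif_pos hB, dif_neg hA, dif_pos hB]
      simp only [smul_zero, zero_add]
      rw [Derivation.map_smul, pderiv_X_mul, hkey w, smul_add]
      congr 1
      · rw [mul_smul_comm, smul_comm]
      · by_cases hD : Dc n w v
        · rw [if_pos hD]
          split_ifs with h
          · rfl
          · exact absurd ((Dc_iff hB).mpr hD) h
        · rw [if_neg hD]
          split_ifs with h
          · exact absurd ((Dc_iff hB).mp h) hD
          · rw [smul_zero]
    · have hD : ¬ Dc n w v := by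
        rintro ⟨-, -, h3⟩
        have := (w.2.2).pos
        omega
      rw [dif_neg hA, dif_neg hB, dif_neg hA, dif_neg hB, if_neg hD]
      simp

theorem sum_Dc (n : ℤ) (e : (Fin d × ℕ × ℕ+) →₀ ℕ) (w : Fin d × ℕ × ℕ+)
    (S : Finset (Fin d × ℕ × ℕ+)) (hS : e.support ⊆ S) :
    ∑ v ∈ S, (if Dc n w v then (((v.2.2 : ℕ) : ℤ) : ℂ) • pderiv v (monomial e (1 : ℂ)) else 0)
      = if h : 1 ≤ n + ((w.2.2 : ℕ) : ℤ) then
          ((n + ((w.2.2 : ℕ) : ℤ) : ℤ) : ℂ) •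
            pderiv ((w.1, w.2.1, (⟨(n + ((w.2.2 : ℕ) : ℤ)).toNat, by omega⟩ : ℕ+)) : Fin d × ℕ × ℕ+)
              (monomial e (1 : ℂ))
        else 0 := by
  by_cases h : 1 ≤ n + ((w.2.2 : ℕ) : ℤ)
  · rw [dif_pos h]
    set u : Fin d × ℕ × ℕ+ := (w.1, w.2.1, (⟨(n + ((w.2.2 : ℕ) : ℤ)).toNat, by omega⟩ : ℕ+)) with hu
    have hDu : ∀ v : Fin d × ℕ × ℕ+, Dc n w v ↔ v = u := by
      intro v
      constructor
      · rintro ⟨h1, h2, h3⟩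
        refine Prod.ext ?_ (Prod.ext ?_ ?_)
        · exact h1
        · exact h2
        · apply Subtype.ext
          show (v.2.2 : ℕ) = (n + ((w.2.2 : ℕ) : ℤ)).toNat
          omega
      · rintro rfl
        refine ⟨rfl, rfl, ?_⟩
        show (((n + ((w.2.2 : ℕ) : ℤ)).toNat : ℕ) : ℤ) = n + ((w.2.2 : ℕ) : ℤ)
        omega
    have hcong : ∀ v ∈ S,
        (if Dc n w v then (((v.2.2 : ℕ) : ℤ) : ℂ) • pderiv v (monomial e (1 : ℂ)) else 0)
        = if v = u then ((n + ((w.2.2 : ℕ) : ℤ) : ℤ) : ℂ) • pderiv v (monomial e (1 : ℂ)) else 0 := by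
      intro v _
      by_cases hD : Dc n w v
      · rw [if_pos hD, if_pos ((hDu v).mp hD), hD.2.2]
      · rw [if_neg hD, if_neg (fun hv => hD ((hDu v).mpr hv))]
    rw [Finset.sum_congr rfl hcong, Finset.sum_ite_eq' S u]
    by_cases hu' : u ∈ S
    · rw [if_pos hu']
    · rw [if_neg hu', pderiv_monomial_one_of_not_mem (fun hmem => hu' (hS hmem)), smul_zero]
  · rw [dif_neg h]
    apply Finset.sum_eq_zero
    intro v _
    rw [if_neg]
    rintro ⟨-, -, h3⟩
    have := (v.2.2).pos
    omega

theorem commD (l : ℂ) (n : ℤ) (e : (Fin d × ℕ × ℕ+) →₀ ℕ) (w : Fin d × ℕ × ℕ+) :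
    Ln d l n (pderiv w (monomial e (1 : ℂ))) - pderiv w (Ln d l n (monomial e (1 : ℂ)))
      = -(if h : 1 ≤ n + ((w.2.2 : ℕ) : ℤ) then
          ((n + ((w.2.2 : ℕ) : ℤ) : ℤ) : ℂ) •
            pderiv ((w.1, w.2.1, (⟨(n + ((w.2.2 : ℕ) : ℤ)).toNat, by omega⟩ : ℕ+)) : Fin d × ℕ × ℕ+)
              (monomial e (1 : ℂ))
        else 0) := by
  have h1 : Ln d l n (pderiv w (monomial e (1 : ℂ)))
      = (e w : ℂ) • ∑ v ∈ e.support, Fterm l n (e - single w 1) v := by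
    rw [pderiv_monomial_one, map_smul, Ln_monomial,
      LnMono_eq_sum l n _ e.support Finsupp.support_tsub]
  have h2 : pderiv w (Ln d l n (monomial e (1 : ℂ)))
      = ∑ v ∈ e.support, pderiv w (Fterm l n e v) := by
    rw [Ln_monomial, LnMono_eq, pderiv_sum]
  rw [h1, h2, ← sum_Dc n e w e.support (Finset.Subset.refl _), Finset.smul_sum,
    ← Finset.sum_sub_distrib, ← Finset.sum_neg_distrib]
  apply Finset.sum_congr rfl
  intro v _
  rw [Fterm_pderiv]
  abel

abbrev Ec (n : ℤ) (w v : Fin d × ℕ × ℕ+) : Prop :=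
  v.1 = w.1 ∧ v.2.1 = w.2.1 ∧ n - ((v.2.2 : ℕ) : ℤ) = ((w.2.2 : ℕ) : ℤ)

noncomputable def Gterm (l : ℂ) (n : ℤ) (e : (Fin d × ℕ × ℕ+) →₀ ℕ) (w v : Fin d × ℕ × ℕ+) :
    MvPolynomial (Fin d × ℕ × ℕ+) ℂ :=
  (l / 2) • (if h : ((v.2.2 : ℕ) : ℤ) < n then
      (((n - ((v.2.2 : ℕ) : ℤ)) * ((v.2.2 : ℕ) : ℤ) : ℤ) : ℂ) •
        ((if Ec n w v then pderiv v (monomial e (1 : ℂ)) else 0)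
          + (if v = w then
              pderiv (((v.1, v.2.1, ⟨(n - ((v.2.2 : ℕ) : ℤ)).toNat, by omega⟩) : Fin d × ℕ × ℕ+))
                (monomial e (1 : ℂ)) else 0))
    else 0)
  + (if h : n < ((v.2.2 : ℕ) : ℤ) then
      (((v.2.2 : ℕ) : ℤ) : ℂ) •
        (if v = w then
          (X (v.1, v.2.1, (⟨(((v.2.2 : ℕ) : ℤ) - n).toNat, by omega⟩ : ℕ+)) : MvPolynomial (Fin d × ℕ × ℕ+) ℂ)
            * monomial e (1 : ℂ) else 0)
    else 0)

theorem Ec_iff {n : ℤ} {w v : Fin d × ℕ × ℕ+} (hA : ((v.2.2 : ℕ) : ℤ) < n) :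
    ((((v.1, v.2.1, ⟨(n - ((v.2.2 : ℕ) : ℤ)).toNat, by omega⟩) : Fin d × ℕ × ℕ+)) = w)
      ↔ Ec n w v := by
  constructor
  · intro h
    rw [← h]
    refine ⟨rfl, rfl, ?_⟩
    show n - ((v.2.2 : ℕ) : ℤ) = (((n - ((v.2.2 : ℕ) : ℤ)).toNat : ℕ) : ℤ)
    omega
  · rintro ⟨h1, h2, h3⟩
    refine Prod.ext h1 (Prod.ext h2 ?_)
    apply Subtype.ext
    show (n - ((v.2.2 : ℕ) : ℤ)).toNat = (w.2.2 : ℕ)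
    omega

theorem Fterm_X (l : ℂ) (n : ℤ) (e : (Fin d × ℕ × ℕ+) →₀ ℕ) (w v : Fin d × ℕ × ℕ+) :
    Fterm l n (e + single w 1) v
      = X w * Fterm l n e v + Gterm l n e w v := by
  have E1 : pderiv v (monomial (e + single w 1) (1 : ℂ))
      = X w * pderiv v (monomial e (1 : ℂ)) + (if v = w then monomial e (1 : ℂ) else 0) := by
    rw [← X_mul_monomial_one, pderiv_X_mul]
  have E2 : ∀ u : Fin d × ℕ × ℕ+, pderiv u (pderiv v (monomial (e + single w 1) (1 : ℂ)))
      = X w * pderiv u (pderiv v (monomial e (1 : ℂ)))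
        + ((if u = w then pderiv v (monomial e (1 : ℂ)) else 0)
          + (if v = w then pderiv u (monomial e (1 : ℂ)) else 0)) := by
    intro u
    rw [E1, map_add, pderiv_X_mul, apply_ite (pderiv u), map_zero, add_assoc]
  unfold Fterm Aterm Bterm Gterm
  by_cases hA : ((v.2.2 : ℕ) : ℤ) < n
  · have hB : ¬ n < ((v.2.2 : ℕ) : ℤ) := by omega
    rw [dif_pos hA, dif_neg hB, dif_pos hA, dif_neg hB, dif_pos hA, dif_neg hB]
    rw [E2, if_congr (Ec_iff hA) rfl rfl]
    simp only [smul_add, mul_add, mul_smul_comm, add_zero]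
  · by_cases hBc : n < ((v.2.2 : ℕ) : ℤ)
    · rw [dif_neg hA, dif_pos hBc, dif_neg hA, dif_pos hBc, dif_neg hA, dif_pos hBc]
      rw [E1, mul_add, mul_ite (v = w), mul_zero]
      simp only [smul_zero, zero_add, smul_add, mul_add, mul_smul_comm, mul_left_comm (X w)]
    · rw [dif_neg hA, dif_neg hBc, dif_neg hA, dif_neg hBc, dif_neg hA, dif_neg hBc]
      simp

theorem sum_G (l : ℂ) (n : ℤ) (e : (Fin d × ℕ × ℕ+) →₀ ℕ) (w : Fin d × ℕ × ℕ+) :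
    ∑ v ∈ (e + single w 1).support, Gterm l n e w v
      = (if h : 1 ≤ n - ((w.2.2 : ℕ) : ℤ) then
          (l * ((((w.2.2 : ℕ) : ℤ) * (n - ((w.2.2 : ℕ) : ℤ)) : ℤ) : ℂ)) •
            pderiv ((w.1, w.2.1, (⟨(n - ((w.2.2 : ℕ) : ℤ)).toNat, by omega⟩ : ℕ+)) : Fin d × ℕ × ℕ+)
              (monomial e (1 : ℂ))
        else if h2 : n < ((w.2.2 : ℕ) : ℤ) then
          ((((w.2.2 : ℕ) : ℤ)) : ℂ) •
            ((X (w.1, w.2.1, (⟨(((w.2.2 : ℕ) : ℤ) - n).toNat, by omega⟩ : ℕ+)) : MvPolynomial (Fin d × ℕ × ℕ+) ℂ)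
              * monomial e (1 : ℂ))
        else 0) := by
  classical
  set S := (e + single w 1).support with hS
  have hwS : w ∈ S := by
    rw [hS, Finsupp.mem_support_iff, Finsupp.add_apply, Finsupp.single_eq_same]
    omega
  have hsub : e.support ⊆ S := by
    intro v hv
    rw [Finsupp.mem_support_iff] at hv ⊢
    rw [Finsupp.add_apply]
    omega
  unfold Gterm
  rw [Finset.sum_add_distrib, ← Finset.smul_sum]
  have hsplit : ∀ v : Fin d × ℕ × ℕ+,
      (if h : ((v.2.2 : ℕ) : ℤ) < n then
        (((n - ((v.2.2 : ℕ) : ℤ)) * ((v.2.2 : ℕ) : ℤ) : ℤ) : ℂ) •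
          ((if Ec n w v then pderiv v (monomial e (1 : ℂ)) else 0)
            + (if v = w then
                pderiv (((v.1, v.2.1, ⟨(n - ((v.2.2 : ℕ) : ℤ)).toNat, by omega⟩) : Fin d × ℕ × ℕ+))
                  (monomial e (1 : ℂ)) else 0))
      else 0)
      = (if h : ((v.2.2 : ℕ) : ℤ) < n then
          (((n - ((v.2.2 : ℕ) : ℤ)) * ((v.2.2 : ℕ) : ℤ) : ℤ) : ℂ) •
            (if Ec n w v then pderiv v (monomial e (1 : ℂ)) else 0) else 0)
        + (if h : ((v.2.2 : ℕ) : ℤ) < n then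
          (((n - ((v.2.2 : ℕ) : ℤ)) * ((v.2.2 : ℕ) : ℤ) : ℤ) : ℂ) •
            (if v = w then
              pderiv (((v.1, v.2.1, ⟨(n - ((v.2.2 : ℕ) : ℤ)).toNat, by omega⟩) : Fin d × ℕ × ℕ+))
                (monomial e (1 : ℂ)) else 0) else 0) := by
    intro v
    by_cases h : ((v.2.2 : ℕ) : ℤ) < n
    · rw [dif_pos h, dif_pos h, dif_pos h, smul_add]
    · rw [dif_neg h, dif_neg h, dif_neg h, add_zero]
  rw [Finset.sum_congr rfl (fun v _ => hsplit v), Finset.sum_add_distrib]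
  -- Sum A2 : the `v = w` part of the A-term
  have hA2 : ∑ v ∈ S, (if h : ((v.2.2 : ℕ) : ℤ) < n then
          (((n - ((v.2.2 : ℕ) : ℤ)) * ((v.2.2 : ℕ) : ℤ) : ℤ) : ℂ) •
            (if v = w then
              pderiv (((v.1, v.2.1, ⟨(n - ((v.2.2 : ℕ) : ℤ)).toNat, by omega⟩) : Fin d × ℕ × ℕ+))
                (monomial e (1 : ℂ)) else 0) else 0)
      = (if h : ((w.2.2 : ℕ) : ℤ) < n then
          (((n - ((w.2.2 : ℕ) : ℤ)) * ((w.2.2 : ℕ) : ℤ) : ℤ) : ℂ) •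
            pderiv (((w.1, w.2.1, ⟨(n - ((w.2.2 : ℕ) : ℤ)).toNat, by omega⟩) : Fin d × ℕ × ℕ+))
              (monomial e (1 : ℂ)) else 0) := by
    have hpt : ∀ v ∈ S, (if h : ((v.2.2 : ℕ) : ℤ) < n then
          (((n - ((v.2.2 : ℕ) : ℤ)) * ((v.2.2 : ℕ) : ℤ) : ℤ) : ℂ) •
            (if v = w then
              pderiv (((v.1, v.2.1, ⟨(n - ((v.2.2 : ℕ) : ℤ)).toNat, by omega⟩) : Fin d × ℕ × ℕ+))
                (monomial e (1 : ℂ)) else 0) else 0)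
        = (if v = w then (if h : ((w.2.2 : ℕ) : ℤ) < n then
          (((n - ((w.2.2 : ℕ) : ℤ)) * ((w.2.2 : ℕ) : ℤ) : ℤ) : ℂ) •
            pderiv (((w.1, w.2.1, ⟨(n - ((w.2.2 : ℕ) : ℤ)).toNat, by omega⟩) : Fin d × ℕ × ℕ+))
              (monomial e (1 : ℂ)) else 0) else 0) := by
      intro v _
      by_cases hv : v = w
      · subst hv
        by_cases h : ((v.2.2 : ℕ) : ℤ) < n
        · rw [if_pos rfl, dif_pos h, dif_pos h, if_pos rfl]
        · rw [if_pos rfl, dif_neg h, dif_neg h]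
      · rw [if_neg hv]
        by_cases h : ((v.2.2 : ℕ) : ℤ) < n
        · rw [dif_pos h, if_neg hv, smul_zero]
        · rw [dif_neg h]
    rw [Finset.sum_congr rfl hpt, Finset.sum_ite_eq' S w, if_pos hwS]
  -- Sum B : the `v = w` part of the B-term
  have hB2 : ∑ v ∈ S, (if h : n < ((v.2.2 : ℕ) : ℤ) then
      (((v.2.2 : ℕ) : ℤ) : ℂ) •
        (if v = w then
          (X (v.1, v.2.1, (⟨(((v.2.2 : ℕ) : ℤ) - n).toNat, by omega⟩ : ℕ+)) : MvPolynomial (Fin d × ℕ × ℕ+) ℂ)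
            * monomial e (1 : ℂ) else 0)
    else 0)
      = (if h : n < ((w.2.2 : ℕ) : ℤ) then
      (((w.2.2 : ℕ) : ℤ) : ℂ) •
        ((X (w.1, w.2.1, (⟨(((w.2.2 : ℕ) : ℤ) - n).toNat, by omega⟩ : ℕ+)) : MvPolynomial (Fin d × ℕ × ℕ+) ℂ)
          * monomial e (1 : ℂ)) else 0) := by
    have hpt : ∀ v ∈ S, (if h : n < ((v.2.2 : ℕ) : ℤ) then
      (((v.2.2 : ℕ) : ℤ) : ℂ) •
        (if v = w then
          (X (v.1, v.2.1, (⟨(((v.2.2 : ℕ) : ℤ) - n).toNat, by omega⟩ : ℕ+)) : MvPolynomial (Fin d × ℕ × ℕ+) ℂ)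
            * monomial e (1 : ℂ) else 0)
    else 0)
        = (if v = w then (if h : n < ((w.2.2 : ℕ) : ℤ) then
      (((w.2.2 : ℕ) : ℤ) : ℂ) •
        ((X (w.1, w.2.1, (⟨(((w.2.2 : ℕ) : ℤ) - n).toNat, by omega⟩ : ℕ+)) : MvPolynomial (Fin d × ℕ × ℕ+) ℂ)
          * monomial e (1 : ℂ)) else 0) else 0) := by
      intro v _
      by_cases hv : v = w
      · subst hv
        by_cases h : n < ((v.2.2 : ℕ) : ℤ)
        · rw [if_pos rfl, dif_pos h, dif_pos h, if_pos rfl]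
        · rw [if_pos rfl, dif_neg h, dif_neg h]
      · rw [if_neg hv]
        by_cases h : n < ((v.2.2 : ℕ) : ℤ)
        · rw [dif_pos h, if_neg hv, smul_zero]
        · rw [dif_neg h]
    rw [Finset.sum_congr rfl hpt, Finset.sum_ite_eq' S w, if_pos hwS]
  -- Sum A1 : the Ec part of the A-term
  have hA1 : ∑ v ∈ S, (if h : ((v.2.2 : ℕ) : ℤ) < n then
          (((n - ((v.2.2 : ℕ) : ℤ)) * ((v.2.2 : ℕ) : ℤ) : ℤ) : ℂ) •
            (if Ec n w v then pderiv v (monomial e (1 : ℂ)) else 0) else 0)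
      = (if h : ((w.2.2 : ℕ) : ℤ) < n then
          (((n - ((w.2.2 : ℕ) : ℤ)) * ((w.2.2 : ℕ) : ℤ) : ℤ) : ℂ) •
            pderiv (((w.1, w.2.1, ⟨(n - ((w.2.2 : ℕ) : ℤ)).toNat, by omega⟩) : Fin d × ℕ × ℕ+))
              (monomial e (1 : ℂ)) else 0) := by
    by_cases hnp : 1 ≤ n - ((w.2.2 : ℕ) : ℤ)
    · have hwlt : ((w.2.2 : ℕ) : ℤ) < n := by omega
      set uE : Fin d × ℕ × ℕ+ :=
        (w.1, w.2.1, (⟨(n - ((w.2.2 : ℕ) : ℤ)).toNat, by omega⟩ : ℕ+)) with huE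
      have hEcu : ∀ v : Fin d × ℕ × ℕ+, Ec n w v ↔ v = uE := by
        intro v
        constructor
        · rintro ⟨h1, h2, h3⟩
          have hp := (v.2.2).pos
          refine Prod.ext h1 (Prod.ext h2 ?_)
          apply Subtype.ext
          show (v.2.2 : ℕ) = (n - ((w.2.2 : ℕ) : ℤ)).toNat
          omega
        · rintro rfl
          refine ⟨rfl, rfl, ?_⟩
          show n - (((n - ((w.2.2 : ℕ) : ℤ)).toNat : ℕ) : ℤ) = ((w.2.2 : ℕ) : ℤ)
          omega
      have hpt : ∀ v ∈ S, (if h : ((v.2.2 : ℕ) : ℤ) < n then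
          (((n - ((v.2.2 : ℕ) : ℤ)) * ((v.2.2 : ℕ) : ℤ) : ℤ) : ℂ) •
            (if Ec n w v then pderiv v (monomial e (1 : ℂ)) else 0) else 0)
          = (if v = uE then
              (((n - ((w.2.2 : ℕ) : ℤ)) * ((w.2.2 : ℕ) : ℤ) : ℤ) : ℂ) •
                pderiv v (monomial e (1 : ℂ)) else 0) := by
        intro v _
        by_cases hEc : Ec n w v
        · obtain ⟨h1, h2, h3⟩ := hEc
          have hp := (w.2.2).pos
          have hvlt : ((v.2.2 : ℕ) : ℤ) < n := by omega
          rw [dif_pos hvlt, if_pos (⟨h1, h2, h3⟩ : Ec n w v), if_pos ((hEcu v).mp ⟨h1, h2, h3⟩)]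
          congr 2
          have hm : ((v.2.2 : ℕ) : ℤ) = n - ((w.2.2 : ℕ) : ℤ) := by omega
          rw [h3, hm]
          ring
        · rw [if_neg (fun hv => hEc ((hEcu v).mpr hv))]
          by_cases h : ((v.2.2 : ℕ) : ℤ) < n
          · rw [dif_pos h, if_neg hEc, smul_zero]
          · rw [dif_neg h]
      rw [Finset.sum_congr rfl hpt, Finset.sum_ite_eq' S uE, dif_pos hwlt]
      by_cases huS : uE ∈ S
      · rw [if_pos huS]
      · rw [if_neg huS,
          pderiv_monomial_one_of_not_mem (fun hmem => huS (hsub hmem)), smul_zero]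
    · have hwnlt : ¬ ((w.2.2 : ℕ) : ℤ) < n := by
        have := (w.2.2).pos
        omega
      rw [dif_neg hwnlt]
      apply Finset.sum_eq_zero
      intro v _
      have hEc : ¬ Ec n w v := by
        rintro ⟨-, -, h3⟩
        have := (v.2.2).pos
        omega
      by_cases h : ((v.2.2 : ℕ) : ℤ) < n
      · rw [dif_pos h, if_neg hEc, smul_zero]
      · rw [dif_neg h]
  rw [hA1, hA2, hB2]
  by_cases hnp : 1 ≤ n - ((w.2.2 : ℕ) : ℤ)
  · have hwlt : ((w.2.2 : ℕ) : ℤ) < n := by omega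
    have hwn : ¬ n < ((w.2.2 : ℕ) : ℤ) := by omega
    rw [dif_pos hwlt, dif_neg hwn, dif_pos hnp, add_zero, ← add_smul, smul_smul]
    congr 1
    push_cast
    ring
  · have hwnlt : ¬ ((w.2.2 : ℕ) : ℤ) < n := by
      have := (w.2.2).pos
      omega
    rw [dif_neg hwnlt, dif_neg hnp, add_zero, smul_zero, zero_add]

theorem commX (l : ℂ) (n : ℤ) (e : (Fin d × ℕ × ℕ+) →₀ ℕ) (w : Fin d × ℕ × ℕ+) :
    Ln d l n (X w * monomial e (1 : ℂ)) - X w * Ln d l n (monomial e (1 : ℂ))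
      = (if h : 1 ≤ n - ((w.2.2 : ℕ) : ℤ) then
          (l * ((((w.2.2 : ℕ) : ℤ) * (n - ((w.2.2 : ℕ) : ℤ)) : ℤ) : ℂ)) •
            pderiv ((w.1, w.2.1, (⟨(n - ((w.2.2 : ℕ) : ℤ)).toNat, by omega⟩ : ℕ+)) : Fin d × ℕ × ℕ+)
              (monomial e (1 : ℂ))
        else if h2 : n < ((w.2.2 : ℕ) : ℤ) then
          ((((w.2.2 : ℕ) : ℤ)) : ℂ) •
            ((X (w.1, w.2.1, (⟨(((w.2.2 : ℕ) : ℤ) - n).toNat, by omega⟩ : ℕ+)) : MvPolynomial (Fin d × ℕ × ℕ+) ℂ)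
              * monomial e (1 : ℂ))
        else 0) := by
  have hsub : e.support ⊆ (e + single w 1).support := by
    intro v hv
    rw [Finsupp.mem_support_iff] at hv ⊢
    rw [Finsupp.add_apply]
    omega
  rw [X_mul_monomial_one, Ln_monomial, Ln_monomial, LnMono_eq,
    LnMono_eq_sum l n e _ hsub, Finset.mul_sum, ← Finset.sum_sub_distrib, ← sum_G l n e w]
  apply Finset.sum_congr rfl
  intro v _
  rw [Fterm_X]
  abel

theorem commD2 (l : ℂ) (n : ℤ) (e : (Fin d × ℕ × ℕ+) →₀ ℕ) (i : Fin d) (j : ℕ) (kp : ℕ+) :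
    Ln d l n (pderiv ((i, j, kp) : Fin d × ℕ × ℕ+) (monomial e (1 : ℂ)))
        - pderiv ((i, j, kp) : Fin d × ℕ × ℕ+) (Ln d l n (monomial e (1 : ℂ)))
      = -(if 1 ≤ n + ((kp : ℕ) : ℤ) then
          ((n + ((kp : ℕ) : ℤ) : ℤ) : ℂ) •
            pderiv ((i, j, (⟨max 1 (n + ((kp : ℕ) : ℤ)).toNat, by omega⟩ : ℕ+)) : Fin d × ℕ × ℕ+)
              (monomial e (1 : ℂ))
        else 0) := by
  rw [commD l n e (i, j, kp)]
  rw [neg_inj]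
  by_cases h : 1 ≤ n + ((kp : ℕ) : ℤ)
  · rw [dif_pos h, if_pos h]
    have ht : ((i, j, (⟨(n + ((kp : ℕ) : ℤ)).toNat, by omega⟩ : ℕ+)) : Fin d × ℕ × ℕ+)
        = ((i, j, (⟨max 1 (n + ((kp : ℕ) : ℤ)).toNat, by omega⟩ : ℕ+)) : Fin d × ℕ × ℕ+) := by
      refine Prod.ext rfl (Prod.ext rfl (Subtype.ext ?_))
      show (n + ((kp : ℕ) : ℤ)).toNat = max 1 (n + ((kp : ℕ) : ℤ)).toNat
      omega
    rw [ht]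
  · rw [dif_neg h, if_neg h]

theorem commX2 (l : ℂ) (n : ℤ) (e : (Fin d × ℕ × ℕ+) →₀ ℕ) (i : Fin d) (j : ℕ) (kp : ℕ+) :
    Ln d l n (X ((i, j, kp) : Fin d × ℕ × ℕ+) * monomial e (1 : ℂ))
        - X ((i, j, kp) : Fin d × ℕ × ℕ+) * Ln d l n (monomial e (1 : ℂ))
      = (if 1 ≤ n - ((kp : ℕ) : ℤ) then
          (l * ((((kp : ℕ) : ℤ) * (n - ((kp : ℕ) : ℤ)) : ℤ) : ℂ)) •
            pderiv ((i, j, (⟨max 1 (n - ((kp : ℕ) : ℤ)).toNat, by omega⟩ : ℕ+)) : Fin d × ℕ × ℕ+)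
              (monomial e (1 : ℂ))
        else if n < ((kp : ℕ) : ℤ) then
          ((((kp : ℕ) : ℤ)) : ℂ) •
            ((X ((i, j, (⟨max 1 (((kp : ℕ) : ℤ) - n).toNat, by omega⟩ : ℕ+)) : Fin d × ℕ × ℕ+) : MvPolynomial (Fin d × ℕ × ℕ+) ℂ)
              * monomial e (1 : ℂ))
        else 0) := by
  rw [commX l n e (i, j, kp)]
  by_cases h : 1 ≤ n - ((kp : ℕ) : ℤ)
  · rw [dif_pos h, if_pos h]
    have ht : ((i, j, (⟨(n - ((kp : ℕ) : ℤ)).toNat, by omega⟩ : ℕ+)) : Fin d × ℕ × ℕ+)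
        = ((i, j, (⟨max 1 (n - ((kp : ℕ) : ℤ)).toNat, by omega⟩ : ℕ+)) : Fin d × ℕ × ℕ+) := by
      refine Prod.ext rfl (Prod.ext rfl (Subtype.ext ?_))
      show (n - ((kp : ℕ) : ℤ)).toNat = max 1 (n - ((kp : ℕ) : ℤ)).toNat
      omega
    rw [ht]
  · rw [dif_neg h, if_neg h]
    by_cases h2 : n < ((kp : ℕ) : ℤ)
    · rw [dif_pos h2, if_pos h2]
      have ht : ((i, j, (⟨(((kp : ℕ) : ℤ) - n).toNat, by omega⟩ : ℕ+)) : Fin d × ℕ × ℕ+)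
          = ((i, j, (⟨max 1 (((kp : ℕ) : ℤ) - n).toNat, by omega⟩ : ℕ+)) : Fin d × ℕ × ℕ+) := by
        refine Prod.ext rfl (Prod.ext rfl (Subtype.ext ?_))
        show (((kp : ℕ) : ℤ) - n).toNat = max 1 (((kp : ℕ) : ℤ) - n).toNat
        omega
      rw [ht]
    · rw [dif_neg h2, if_neg h2]

theorem pderiv_toLinearMap_apply (w : Fin d × ℕ × ℕ+) (p : MvPolynomial (Fin d × ℕ × ℕ+) ℂ) :
    (pderiv w).toLinearMap p = pderiv w p := rfl

theorem aOp0_pos {d : ℕ} {l : ℂ} (i : Fin d) (j : ℕ) {k : ℤ} (hk : 0 < k) {kp : ℕ+}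
    (hkp : ((kp : ℕ) : ℤ) = k) :
    aOp0 d l i j k = ((k : ℂ) * l) • (pderiv ((i, j, kp) : Fin d × ℕ × ℕ+)).toLinearMap := by
  unfold aOp0
  rw [dif_pos hk]
  have ht : (⟨k.toNat, by omega⟩ : ℕ+) = kp := by
    apply Subtype.ext
    show k.toNat = (kp : ℕ)
    omega
  rw [ht]
  rfl

theorem aOp0_zero {d : ℕ} {l : ℂ} (i : Fin d) (j : ℕ) : aOp0 d l i j 0 = 0 := by
  unfold aOp0
  simp

theorem aOp0_neg {d : ℕ} {l : ℂ} (i : Fin d) (j : ℕ) {k : ℤ} (hk : k < 0) {kp : ℕ+}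
    (hkp : ((kp : ℕ) : ℤ) = -k) :
    aOp0 d l i j k = LinearMap.mulLeft ℂ (X ((i, j, kp) : Fin d × ℕ × ℕ+)) := by
  unfold aOp0
  rw [dif_neg (by omega : ¬ 0 < k), dif_neg (by omega : ¬ k = 0)]
  have ht : (⟨(-k).toNat, by omega⟩ : ℕ+) = kp := by
    apply Subtype.ext
    show (-k).toNat = (kp : ℕ)
    omega
  rw [ht]

end S5

/-- Proposition 3.1, eq. (3.2): `[L(n), a_{i,j}(k)] = -k·a_{i,j}(n+k)`
for all `n ≥ -1`, `i ∈ Fin d`, `j ∈ ℕ`, `k ∈ ℤ`. -/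
theorem statement5 (d : ℕ) (hd : 0 < d) (l : ℂ) (hl : l ≠ 0)
    (n : ℤ) (hn : -1 ≤ n) (i : Fin d) (j : ℕ) (k : ℤ) :
    Ln d l n * aOp0 d l i j k - aOp0 d l i j k * Ln d l n
      = (-(k : ℂ)) • aOp0 d l i j (n + k) := by
  classical
  rcases lt_trichotomy k 0 with hk | rfl | hk
  · -- k < 0
    set kp : ℕ+ := ⟨(-k).toNat, by omega⟩ with hkp_def
    have hkp : ((kp : ℕ) : ℤ) = -k := by
      show (((-k).toNat : ℕ) : ℤ) = -k
      omega
    rw [S5.aOp0_neg i j hk hkp]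
    rcases lt_trichotomy (n + k) 0 with hnk | hnk | hnk
    · set mp : ℕ+ := ⟨(-(n + k)).toNat, by omega⟩ with hmp_def
      have hmp : ((mp : ℕ) : ℤ) = -(n + k) := by
        show (((-(n + k)).toNat : ℕ) : ℤ) = -(n + k)
        omega
      rw [S5.aOp0_neg i j hnk hmp]
      refine Module.Basis.ext (basisMonomials (Fin d × ℕ × ℕ+) ℂ) (fun e => ?_)
      simp only [coe_basisMonomials, LinearMap.sub_apply, Module.End.mul_apply,
        LinearMap.smul_apply, LinearMap.mulLeft_apply]
      rw [S5.commX2 l n e i j kp,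
        if_neg (by omega : ¬ (1 : ℤ) ≤ n - ((kp : ℕ) : ℤ)),
        if_pos (by omega : n < ((kp : ℕ) : ℤ))]
      have ht : ((i, j, (⟨max 1 (((kp : ℕ) : ℤ) - n).toNat, by omega⟩ : ℕ+)) : Fin d × ℕ × ℕ+)
          = ((i, j, mp) : Fin d × ℕ × ℕ+) := by
        refine Prod.ext rfl (Prod.ext rfl (Subtype.ext ?_))
        show max 1 (((kp : ℕ) : ℤ) - n).toNat = (-(n + k)).toNat
        omega
      rw [ht]
      congr 1
      rw [hkp]
      push_cast
      ring
    · rw [show n + k = 0 from hnk, S5.aOp0_zero]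
      refine Module.Basis.ext (basisMonomials (Fin d × ℕ × ℕ+) ℂ) (fun e => ?_)
      simp only [coe_basisMonomials, LinearMap.sub_apply, Module.End.mul_apply,
        LinearMap.smul_apply, LinearMap.mulLeft_apply, LinearMap.zero_apply, smul_zero]
      rw [S5.commX2 l n e i j kp,
        if_neg (by omega : ¬ (1 : ℤ) ≤ n - ((kp : ℕ) : ℤ)),
        if_neg (by omega : ¬ n < ((kp : ℕ) : ℤ))]
    · set mp : ℕ+ := ⟨(n + k).toNat, by omega⟩ with hmp_def
      have hmp : ((mp : ℕ) : ℤ) = n + k := by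
        show (((n + k).toNat : ℕ) : ℤ) = n + k
        omega
      rw [S5.aOp0_pos i j hnk hmp]
      refine Module.Basis.ext (basisMonomials (Fin d × ℕ × ℕ+) ℂ) (fun e => ?_)
      simp only [coe_basisMonomials, LinearMap.sub_apply, Module.End.mul_apply,
        LinearMap.smul_apply, LinearMap.mulLeft_apply, S5.pderiv_toLinearMap_apply]
      rw [S5.commX2 l n e i j kp,
        if_pos (by omega : (1 : ℤ) ≤ n - ((kp : ℕ) : ℤ))]
      have ht : ((i, j, (⟨max 1 (n - ((kp : ℕ) : ℤ)).toNat, by omega⟩ : ℕ+)) : Fin d × ℕ × ℕ+)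
          = ((i, j, mp) : Fin d × ℕ × ℕ+) := by
        refine Prod.ext rfl (Prod.ext rfl (Subtype.ext ?_))
        show max 1 (n - ((kp : ℕ) : ℤ)).toNat = (n + k).toNat
        omega
      rw [ht, smul_smul]
      congr 1
      rw [hkp]
      push_cast
      ring
  · -- k = 0
    rw [S5.aOp0_zero]
    simp
  · -- 0 < k
    set kp : ℕ+ := ⟨k.toNat, by omega⟩ with hkp_def
    have hkp : ((kp : ℕ) : ℤ) = k := by
      show ((k.toNat : ℕ) : ℤ) = k
      omega
    rw [S5.aOp0_pos i j hk hkp]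
    rcases eq_or_lt_of_le (by omega : (0 : ℤ) ≤ n + k) with hnk | hnk
    · rw [show n + k = 0 from hnk.symm, S5.aOp0_zero]
      refine Module.Basis.ext (basisMonomials (Fin d × ℕ × ℕ+) ℂ) (fun e => ?_)
      simp only [coe_basisMonomials, LinearMap.sub_apply, Module.End.mul_apply,
        LinearMap.smul_apply, LinearMap.zero_apply, smul_zero,
        S5.pderiv_toLinearMap_apply]
      rw [map_smul, ← smul_sub, S5.commD2 l n e i j kp,
        if_neg (by omega : ¬ (1 : ℤ) ≤ n + ((kp : ℕ) : ℤ)), neg_zero, smul_zero]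
    · set mp : ℕ+ := ⟨(n + k).toNat, by omega⟩ with hmp_def
      have hmp : ((mp : ℕ) : ℤ) = n + k := by
        show (((n + k).toNat : ℕ) : ℤ) = n + k
        omega
      rw [S5.aOp0_pos i j hnk hmp]
      refine Module.Basis.ext (basisMonomials (Fin d × ℕ × ℕ+) ℂ) (fun e => ?_)
      simp only [coe_basisMonomials, LinearMap.sub_apply, Module.End.mul_apply,
        LinearMap.smul_apply, S5.pderiv_toLinearMap_apply]
      rw [map_smul, ← smul_sub, S5.commD2 l n e i j kp,
        if_pos (by omega : (1 : ℤ) ≤ n + ((kp : ℕ) : ℤ))]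
      have ht : ((i, j, (⟨max 1 (n + ((kp : ℕ) : ℤ)).toNat, by omega⟩ : ℕ+)) : Fin d × ℕ × ℕ+)
          = ((i, j, mp) : Fin d × ℕ × ℕ+) := by
        refine Prod.ext rfl (Prod.ext rfl (Subtype.ext ?_))
        show max 1 (n + ((kp : ℕ) : ℤ)).toNat = (n + k).toNat
        omega
      rw [ht]
      simp only [smul_neg, smul_smul]
      rw [← neg_smul]
      congr 1
      rw [hkp]
      push_cast
      ring
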